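/- Let A be a real n×n matrix and Q a real n×n symmetric positive definite matrix such that QA + AᵀQ = -S where S is symmetric positive semidefinite. Suppose the only vector x ∈ ℝⁿ satisfying S·Aᵏ·x = 0 for all integers k ≥ 0 is x = 0 (equivalently, ⋂_{k=0}^{n-1} ker(S·Aᵏ) = {0}). Then every solution of dx/dt = A·x converges to the origin, i.e., e^{tA}·x₀ → 0 as t → ∞ for every x₀ ∈ ℝⁿ, and hence the origin is asymptotically stable. -/

import Mathlib

open Matrix Filter MeasureTheory intervalIntegral NormedSpace

attribute [local instance] Matrix.linftyOpNormedAddCommGroup Matrix.linftyOpNormedRing Matrix.linftyOpNormedAlgebra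

namespace LasalleAux

variable {n : ℕ}

noncomputable def mvCLM (x0 : Fin n → ℝ) : Matrix (Fin n) (Fin n) ℝ →L[ℝ] (Fin n → ℝ) :=
  LinearMap.toContinuousLinearMap
  { toFun := fun M => M.mulVec x0
    map_add' := fun M N => Matrix.add_mulVec M N x0
    map_smul' := fun c M => smul_mulVec c M x0 }

@[simp] lemma mvCLM_apply (x0 : Fin n → ℝ) (M : Matrix (Fin n) (Fin n) ℝ) :
    mvCLM x0 M = M.mulVec x0 := rfl

noncomputable def mvCLM' (B : Matrix (Fin n) (Fin n) ℝ) : (Fin n → ℝ) →L[ℝ] (Fin n → ℝ) :=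
  LinearMap.toContinuousLinearMap B.mulVecLin

@[simp] lemma mvCLM'_apply (B : Matrix (Fin n) (Fin n) ℝ) (v : Fin n → ℝ) :
    mvCLM' B v = B.mulVec v := rfl

lemma hasDerivAt_flow (A : Matrix (Fin n) (Fin n) ℝ) (x0 : Fin n → ℝ) (t : ℝ) :
    HasDerivAt (fun t : ℝ => (exp (t • A)).mulVec x0)
      (A.mulVec ((exp (t • A)).mulVec x0)) t := by
  have h := (mvCLM x0).hasFDerivAt.comp_hasDerivAt t (hasDerivAt_exp_smul_const' A t)
  rw [Matrix.mulVec_mulVec]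
  exact h

lemma continuous_flow (A : Matrix (Fin n) (Fin n) ℝ) (x0 : Fin n → ℝ) :
    Continuous (fun t : ℝ => (exp (t • A)).mulVec x0) :=
  continuous_iff_continuousAt.2 fun t => (hasDerivAt_flow A x0 t).continuousAt

lemma dot_transpose (M : Matrix (Fin n) (Fin n) ℝ) (y z : Fin n → ℝ) :
    (M.mulVec y) ⬝ᵥ z = y ⬝ᵥ (Mᵀ.mulVec z) := by
  rw [Matrix.dotProduct_mulVec, Matrix.vecMul_transpose]

lemma hasDerivAt_quad {x : ℝ → Fin n → ℝ} {v : Fin n → ℝ} {t : ℝ}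
    (R : Matrix (Fin n) (Fin n) ℝ) (hx : HasDerivAt x v t) :
    HasDerivAt (fun t => x t ⬝ᵥ R.mulVec (x t))
      (v ⬝ᵥ R.mulVec (x t) + x t ⬝ᵥ R.mulVec v) t := by
  have hxi : ∀ i, HasDerivAt (fun t => x t i) (v i) t := by
    intro i
    exact (ContinuousLinearMap.proj (R := ℝ) (φ := fun _ : Fin n => ℝ)
      i).hasFDerivAt.comp_hasDerivAt t hx
  have hinner : ∀ i, HasDerivAt (fun t => ∑ j, R i j * x t j) (∑ j, R i j * v j) t :=
    fun i => HasDerivAt.fun_sum fun j _ => (hxi j).const_mul (R i j)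
  have h : HasDerivAt (fun t => ∑ i, x t i * ∑ j, R i j * x t j)
      (∑ i, (v i * ∑ j, R i j * x t j + x t i * ∑ j, R i j * v j)) t :=
    HasDerivAt.fun_sum fun i _ => (hxi i).mul (hinner i)
  have e1 : (fun t => x t ⬝ᵥ R.mulVec (x t)) = fun t => ∑ i, x t i * ∑ j, R i j * x t j := by
    funext s; simp [dotProduct, Matrix.mulVec]
  have e2 : v ⬝ᵥ R.mulVec (x t) + x t ⬝ᵥ R.mulVec v
      = ∑ i, (v i * ∑ j, R i j * x t j + x t i * ∑ j, R i j * v j) := by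
    simp [dotProduct, Matrix.mulVec, Finset.sum_add_distrib]
  rw [e1, e2]; exact h




lemma exp_add_mul (A : Matrix (Fin n) (Fin n) ℝ) (s t : ℝ) :
    exp ((s + t) • A) = exp (s • A) * exp (t • A) := by
  rw [add_smul]
  exact NormedSpace.exp_add_of_commute (((Commute.refl A).smul_left s).smul_right t)

lemma exp_inv_mulVec (A : Matrix (Fin n) (Fin n) ℝ) (t : ℝ) (y : Fin n → ℝ) :
    (exp ((-t) • A)).mulVec ((exp (t • A)).mulVec y) = y := by
  rw [Matrix.mulVec_mulVec, ← exp_add_mul, neg_add_cancel, zero_smul, NormedSpace.exp_zero,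
    Matrix.one_mulVec]

lemma contExp (A : Matrix (Fin n) (Fin n) ℝ) : Continuous fun u : ℝ => exp (u • A) :=
  exp_continuous.comp (continuous_id.smul continuous_const)

lemma contM (A S : Matrix (Fin n) (Fin n) ℝ) :
    Continuous fun u : ℝ => (exp (u • A))ᵀ * S * exp (u • A) :=
  ((contExp A).matrix_transpose.matrix_mul continuous_const).matrix_mul (contExp A)

noncomputable def Wmat (A S : Matrix (Fin n) (Fin n) ℝ) (T : ℝ) : Matrix (Fin n) (Fin n) ℝ :=
  Matrix.of fun i j => ∫ u in (0:ℝ)..T, ((exp (u • A))ᵀ * S * exp (u • A)) i j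

lemma quad_expand (M : Matrix (Fin n) (Fin n) ℝ) (y : Fin n → ℝ) :
    y ⬝ᵥ M.mulVec y = ∑ i, ∑ j, (y i * y j) * M i j := by
  simp only [dotProduct, Matrix.mulVec, Finset.mul_sum]
  exact Finset.sum_congr rfl fun i _ => Finset.sum_congr rfl fun j _ => by ring

lemma quad_conj (E S : Matrix (Fin n) (Fin n) ℝ) (y : Fin n → ℝ) :
    (E.mulVec y) ⬝ᵥ S.mulVec (E.mulVec y) = y ⬝ᵥ (Eᵀ * S * E).mulVec y := by
  rw [dot_transpose E y (S.mulVec (E.mulVec y)), Matrix.mulVec_mulVec, Matrix.mulVec_mulVec,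
    mul_assoc]

@[simp] lemma Wmat_apply (A S : Matrix (Fin n) (Fin n) ℝ) (T : ℝ) (i j : Fin n) :
    Wmat A S T i j = ∫ u in (0:ℝ)..T, ((exp (u • A))ᵀ * S * exp (u • A)) i j := rfl

lemma intervalIntegrable_sum {T : ℝ} {ι : Type*} (s : Finset ι) {f : ι → ℝ → ℝ}
    (h : ∀ i ∈ s, IntervalIntegrable (f i) volume 0 T) :
    IntervalIntegrable (fun u => ∑ i ∈ s, f i u) volume 0 T := by
  have h2 := IntervalIntegrable.sum s h
  have e : (∑ i ∈ s, f i) = fun u => ∑ i ∈ s, f i u := by funext u; simp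
  rwa [e] at h2

lemma double_sum_integral {T : ℝ} (f : Fin n → Fin n → ℝ → ℝ)
    (hf : ∀ i j, IntervalIntegrable (f i j) volume 0 T) :
    ∫ u in (0:ℝ)..T, ∑ i, ∑ j, f i j u = ∑ i, ∑ j, ∫ u in (0:ℝ)..T, f i j u := by
  rw [intervalIntegral.integral_finset_sum
    (f := fun (i : Fin n) (u : ℝ) => ∑ j, f i j u)
    (fun i _ => intervalIntegrable_sum _ fun j _ => hf i j)]
  exact Finset.sum_congr rfl fun i _ => intervalIntegral.integral_finset_sum (fun j _ => hf i j)

lemma quad_integral (M : ℝ → Matrix (Fin n) (Fin n) ℝ) (hM : Continuous M) (T : ℝ)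
    (y : Fin n → ℝ) :
    y ⬝ᵥ (Matrix.of fun i j => ∫ u in (0:ℝ)..T, M u i j).mulVec y
      = ∫ u in (0:ℝ)..T, y ⬝ᵥ (M u).mulVec y := by
  have hint : ∀ i j : Fin n, IntervalIntegrable (fun u => M u i j) volume 0 T := fun i j =>
    ((continuous_apply j).comp ((continuous_apply i).comp hM)).intervalIntegrable 0 T
  symm
  calc (∫ u in (0:ℝ)..T, y ⬝ᵥ (M u).mulVec y)
      = ∫ u in (0:ℝ)..T, ∑ i, ∑ j, (y i * y j) * M u i j := by
        refine intervalIntegral.integral_congr fun u _ => ?_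
        rw [quad_expand]
    _ = ∑ i, ∑ j, ∫ u in (0:ℝ)..T, (y i * y j) * M u i j :=
        double_sum_integral (fun i j u => (y i * y j) * M u i j)
          (fun i j => (hint i j).const_mul _)
    _ = ∑ i, ∑ j, (y i * y j) * (∫ u in (0:ℝ)..T, M u i j) := by
        refine Finset.sum_congr rfl fun i _ => Finset.sum_congr rfl fun j _ => ?_
        rw [intervalIntegral.integral_const_mul]
    _ = y ⬝ᵥ (Matrix.of fun i j => ∫ u in (0:ℝ)..T, M u i j).mulVec y :=
        (quad_expand _ y).symm

lemma quad_W (A S : Matrix (Fin n) (Fin n) ℝ) (T : ℝ) (y : Fin n → ℝ) :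
    y ⬝ᵥ (Wmat A S T).mulVec y
      = ∫ u in (0:ℝ)..T,
          ((exp (u • A)).mulVec y) ⬝ᵥ S.mulVec ((exp (u • A)).mulVec y) := by
  rw [Wmat, quad_integral _ (contM A S) T y]
  exact intervalIntegral.integral_congr fun u _ => (quad_conj _ _ _).symm



lemma continuous_quad (W : Matrix (Fin n) (Fin n) ℝ) :
    Continuous fun y : Fin n → ℝ => y ⬝ᵥ W.mulVec y := by
  simp only [dotProduct, Matrix.mulVec]
  exact continuous_finset_sum _ fun i _ => (continuous_apply i).mul
    (continuous_finset_sum _ fun j _ => (continuous_const.mul (continuous_apply j)))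

lemma eqOn_of_integral_zero {T : ℝ} (hT : 0 < T) {G : ℝ → ℝ} (hG : Continuous G)
    (hpos : ∀ u, 0 ≤ G u) (h0 : ∫ u in (0:ℝ)..T, G u = 0) :
    ∀ u ∈ Set.Ioo 0 T, G u = 0 := by
  rw [intervalIntegral.integral_of_le hT.le] at h0
  have hint : IntegrableOn G (Set.Ioc 0 T) volume := (hG.intervalIntegrable 0 T).1
  have hae : G =ᶠ[ae (volume.restrict (Set.Ioc 0 T))] 0 :=
    (MeasureTheory.integral_eq_zero_iff_of_nonneg_ae
      (Filter.Eventually.of_forall fun u => hpos u) hint).1 h0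
  have hopen : IsOpen {u : ℝ | G u ≠ 0} := isOpen_compl_singleton.preimage hG
  have h1 : volume.restrict (Set.Ioc 0 T) {u : ℝ | G u ≠ 0} = 0 := by
    rw [Filter.EventuallyEq, ae_iff] at hae
    simpa using hae
  rw [Measure.restrict_apply hopen.measurableSet] at h1
  intro u hu
  by_contra hne
  have hpos' : 0 < volume ({u : ℝ | G u ≠ 0} ∩ Set.Ioo 0 T) :=
    (hopen.inter isOpen_Ioo).measure_pos volume ⟨u, hne, hu⟩
  have hle : volume ({u : ℝ | G u ≠ 0} ∩ Set.Ioo 0 T) ≤ 0 :=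
    h1 ▸ measure_mono (Set.inter_subset_inter_right _ Set.Ioo_subset_Ioc_self)
  exact absurd (le_antisymm hle hpos'.le) (ne_of_gt hpos')

lemma obs_vanish {A S : Matrix (Fin n) (Fin n) ℝ} {y : Fin n → ℝ}
    (h0 : ∀ u ∈ Set.Ioo (0:ℝ) 1, S.mulVec ((exp (u • A)).mulVec y) = 0) :
    ∀ k : ℕ, ∀ u ∈ Set.Ioo (0:ℝ) 1,
      (S * A ^ k).mulVec ((exp (u • A)).mulVec y) = 0 := by
  intro k
  induction k with
  | zero => simpa using h0
  | succ k ih =>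
    intro u hu
    have hD : HasDerivAt (fun t : ℝ => (S * A ^ k).mulVec ((exp (t • A)).mulVec y))
        ((S * A ^ k).mulVec (A.mulVec ((exp (u • A)).mulVec y))) u := by
      have := (mvCLM' (S * A ^ k)).hasFDerivAt.comp_hasDerivAt u (hasDerivAt_flow A y u)
      simpa [Function.comp_def, Matrix.mulVec_mulVec, mul_assoc] using this
    have hev : (fun t : ℝ => (S * A ^ k).mulVec ((exp (t • A)).mulVec y))
        =ᶠ[nhds u] (fun _ => (0 : Fin n → ℝ)) := by
      filter_upwards [isOpen_Ioo.mem_nhds hu] with v hv using ih v hv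
    have hD0 : HasDerivAt (fun _ : ℝ => (0 : Fin n → ℝ))
        ((S * A ^ k).mulVec (A.mulVec ((exp (u • A)).mulVec y))) u :=
      (hev.hasDerivAt_iff).1 hD
    have hzero := hD0.unique (hasDerivAt_const u 0)
    have e : (S * A ^ (k + 1)).mulVec ((exp (u • A)).mulVec y)
        = (S * A ^ k).mulVec (A.mulVec ((exp (u • A)).mulVec y)) := by
      simp [Matrix.mulVec_mulVec, pow_succ, mul_assoc]
    rw [e, hzero]

lemma star_eq (y : Fin n → ℝ) : star y = y := by
  funext i; simp

lemma Wpos {A S : Matrix (Fin n) (Fin n) ℝ} (hS : S.PosSemidef)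
    (hobs : ∀ x : Fin n → ℝ, (∀ k : ℕ, (S * A ^ k).mulVec x = 0) → x = 0)
    {y : Fin n → ℝ} (hy : y ≠ 0) :
    0 < y ⬝ᵥ (Wmat A S 1).mulVec y := by
  set G : ℝ → ℝ :=
    fun u => ((exp (u • A)).mulVec y) ⬝ᵥ S.mulVec ((exp (u • A)).mulVec y) with hGdef
  have hGcont : Continuous G := (continuous_quad S).comp (continuous_flow A y)
  have hGnn : ∀ u, 0 ≤ G u := by
    intro u
    have := hS.dotProduct_mulVec_nonneg ((exp (u • A)).mulVec y)
    rwa [star_eq] at this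
  have hquad : y ⬝ᵥ (Wmat A S 1).mulVec y = ∫ u in (0:ℝ)..1, G u := quad_W A S 1 y
  have hnn : 0 ≤ ∫ u in (0:ℝ)..1, G u :=
    intervalIntegral.integral_nonneg zero_le_one fun u _ => hGnn u
  rcases hnn.lt_or_eq with h | h
  · rw [hquad]; exact h
  · exfalso
    have hvan : ∀ u ∈ Set.Ioo (0:ℝ) 1, S.mulVec ((exp (u • A)).mulVec y) = 0 := by
      intro u hu
      have hG0 : G u = 0 := eqOn_of_integral_zero one_pos hGcont hGnn h.symm u hu
      have := (hS.dotProduct_mulVec_zero_iff ((exp (u • A)).mulVec y)).1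
      rw [star_eq] at this
      exact this hG0
    have hk := obs_vanish hvan
    have hmem : (1/2 : ℝ) ∈ Set.Ioo (0:ℝ) 1 := by norm_num
    have hz : (exp (((1:ℝ)/2) • A)).mulVec y = 0 :=
      hobs _ (fun k => hk k (1/2) hmem)
    have : y = 0 := by
      have h2 := exp_inv_mulVec A (1/2) y
      rw [hz, Matrix.mulVec_zero] at h2
      exact h2.symm
    exact hy this

lemma quad_zero (W : Matrix (Fin n) (Fin n) ℝ) : (0 : Fin n → ℝ) ⬝ᵥ W.mulVec 0 = 0 := by
  simp

lemma quad_smul (W : Matrix (Fin n) (Fin n) ℝ) (c : ℝ) (y : Fin n → ℝ) :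
    (c • y) ⬝ᵥ W.mulVec (c • y) = c ^ 2 * (y ⬝ᵥ W.mulVec y) := by
  rw [Matrix.mulVec_smul, dotProduct_smul, smul_dotProduct, smul_eq_mul, smul_eq_mul]
  ring

lemma quad_lower (hn : 0 < n) (W : Matrix (Fin n) (Fin n) ℝ)
    (hW : ∀ y : Fin n → ℝ, y ≠ 0 → 0 < y ⬝ᵥ W.mulVec y) :
    ∃ c > 0, ∀ y : Fin n → ℝ, c * ‖y‖ ^ 2 ≤ y ⬝ᵥ W.mulVec y := by
  haveI : Nonempty (Fin n) := ⟨⟨0, hn⟩⟩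
  have hne : (Metric.sphere (0 : Fin n → ℝ) 1).Nonempty := by
    refine ⟨fun _ => (1 : ℝ), ?_⟩
    rw [mem_sphere_zero_iff_norm]
    have : ‖(fun _ : Fin n => (1:ℝ))‖ = ‖(1:ℝ)‖ := pi_norm_const (1:ℝ)
    simpa using this
  obtain ⟨y0, hy0mem, hy0min⟩ := (isCompact_sphere (0 : Fin n → ℝ) 1).exists_isMinOn hne
    (continuous_quad W).continuousOn
  have hy0norm : ‖y0‖ = 1 := mem_sphere_zero_iff_norm.1 hy0mem
  have hy0ne : y0 ≠ 0 := by
    intro h; rw [h, norm_zero] at hy0norm; exact one_ne_zero hy0norm.symm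
  refine ⟨y0 ⬝ᵥ W.mulVec y0, hW y0 hy0ne, fun y => ?_⟩
  rcases eq_or_ne y 0 with rfl | hy
  · simp
  · have hyn : ‖y‖ ≠ 0 := norm_ne_zero_iff.2 hy
    set u : Fin n → ℝ := ‖y‖⁻¹ • y with hu
    have hun : ‖u‖ = 1 := by
      rw [hu, norm_smul, norm_inv, norm_norm, inv_mul_cancel₀ hyn]
    have humem : u ∈ Metric.sphere (0 : Fin n → ℝ) 1 := mem_sphere_zero_iff_norm.2 hun
    have hrec : y = ‖y‖ • u := by rw [hu, smul_inv_smul₀ hyn]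
    have : y ⬝ᵥ W.mulVec y = ‖y‖ ^ 2 * (u ⬝ᵥ W.mulVec u) := by
      conv_lhs => rw [hrec]
      exact quad_smul W _ u
    rw [this, mul_comm (y0 ⬝ᵥ W.mulVec y0)]
    have hmin : y0 ⬝ᵥ W.mulVec y0 ≤ u ⬝ᵥ W.mulVec u := hy0min humem
    have hnn : (0:ℝ) ≤ ‖y‖ ^ 2 := sq_nonneg _
    nlinarith [hmin, hnn]

lemma quad_upper (Q : Matrix (Fin n) (Fin n) ℝ) (y : Fin n → ℝ) :
    y ⬝ᵥ Q.mulVec y ≤ (∑ i, ∑ j, |Q i j|) * ‖y‖ ^ 2 := by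
  rw [quad_expand]
  calc ∑ i, ∑ j, (y i * y j) * Q i j
      ≤ ∑ i, ∑ j, |Q i j| * ‖y‖ ^ 2 := by
        refine Finset.sum_le_sum fun i _ => Finset.sum_le_sum fun j _ => ?_
        have h1 : |y i| ≤ ‖y‖ := by simpa [Real.norm_eq_abs] using norm_le_pi_norm y i
        have h2 : |y j| ≤ ‖y‖ := by simpa [Real.norm_eq_abs] using norm_le_pi_norm y j
        calc (y i * y j) * Q i j ≤ |(y i * y j) * Q i j| := le_abs_self _
          _ = |Q i j| * (|y i| * |y j|) := by rw [abs_mul, abs_mul]; ring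
          _ ≤ |Q i j| * (‖y‖ * ‖y‖) := by
              refine mul_le_mul_of_nonneg_left ?_ (abs_nonneg _)
              exact mul_le_mul h1 h2 (abs_nonneg _) (norm_nonneg _)
          _ = |Q i j| * ‖y‖ ^ 2 := by ring
    _ = (∑ i, ∑ j, |Q i j|) * ‖y‖ ^ 2 := by
        simp [Finset.sum_mul]

noncomputable def flow (A : Matrix (Fin n) (Fin n) ℝ) (x0 : Fin n → ℝ) (t : ℝ) : Fin n → ℝ :=
  (exp (t • A)).mulVec x0

noncomputable def Vf (A Q : Matrix (Fin n) (Fin n) ℝ) (x0 : Fin n → ℝ) (t : ℝ) : ℝ :=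
  flow A x0 t ⬝ᵥ Q.mulVec (flow A x0 t)

lemma flow_zero (A : Matrix (Fin n) (Fin n) ℝ) (x0 : Fin n → ℝ) : flow A x0 0 = x0 := by
  simp [flow, NormedSpace.exp_zero]

lemma flow_shift (A : Matrix (Fin n) (Fin n) ℝ) (x0 : Fin n → ℝ) (t s : ℝ) :
    flow A x0 s = flow A (flow A x0 t) (s - t) := by
  unfold flow
  rw [Matrix.mulVec_mulVec, ← exp_add_mul, sub_add_cancel]

lemma hasDerivAt_V {A Q S : Matrix (Fin n) (Fin n) ℝ} (hlyap : Q * A + Aᵀ * Q = -S)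
    (x0 : Fin n → ℝ) (t : ℝ) :
    HasDerivAt (Vf A Q x0) (-(flow A x0 t ⬝ᵥ S.mulVec (flow A x0 t))) t := by
  have h := hasDerivAt_quad Q (hasDerivAt_flow A x0 t)
  have e : (A.mulVec (flow A x0 t)) ⬝ᵥ Q.mulVec (flow A x0 t)
      + flow A x0 t ⬝ᵥ Q.mulVec (A.mulVec (flow A x0 t))
      = -(flow A x0 t ⬝ᵥ S.mulVec (flow A x0 t)) := by
    set x := flow A x0 t
    have h1 : (A.mulVec x) ⬝ᵥ Q.mulVec x = x ⬝ᵥ (Aᵀ * Q).mulVec x := by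
      rw [dot_transpose, Matrix.mulVec_mulVec]
    have h2 : x ⬝ᵥ Q.mulVec (A.mulVec x) = x ⬝ᵥ (Q * A).mulVec x := by
      rw [Matrix.mulVec_mulVec]
    rw [h1, h2, ← dotProduct_add, ← Matrix.add_mulVec, add_comm (Aᵀ * Q), hlyap,
      Matrix.neg_mulVec, dotProduct_neg]
  rw [← e]
  exact h

lemma V_antitone {A Q S : Matrix (Fin n) (Fin n) ℝ} (hS : S.PosSemidef)
    (hlyap : Q * A + Aᵀ * Q = -S) (x0 : Fin n → ℝ) : Antitone (Vf A Q x0) := by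
  refine antitone_of_deriv_nonpos (fun t => (hasDerivAt_V hlyap x0 t).differentiableAt) ?_
  intro t
  rw [(hasDerivAt_V hlyap x0 t).deriv]
  refine neg_nonpos.2 ?_
  have := hS.dotProduct_mulVec_nonneg (flow A x0 t)
  rwa [star_eq] at this

lemma V_nonneg {A Q : Matrix (Fin n) (Fin n) ℝ} (hQ : Q.PosDef) (x0 : Fin n → ℝ) (t : ℝ) :
    0 ≤ Vf A Q x0 t := by
  have := hQ.posSemidef.dotProduct_mulVec_nonneg (flow A x0 t)
  rwa [star_eq] at this

lemma V_sub {A Q S : Matrix (Fin n) (Fin n) ℝ} (hlyap : Q * A + Aᵀ * Q = -S)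
    (x0 : Fin n → ℝ) (t : ℝ) :
    Vf A Q x0 t - Vf A Q x0 (t + 1)
      = flow A x0 t ⬝ᵥ (Wmat A S 1).mulVec (flow A x0 t) := by
  have hcont : Continuous fun s : ℝ => flow A x0 s ⬝ᵥ S.mulVec (flow A x0 s) :=
    (continuous_quad S).comp (continuous_flow A x0)
  have hftc : ∫ s in t..(t+1), -(flow A x0 s ⬝ᵥ S.mulVec (flow A x0 s))
      = Vf A Q x0 (t + 1) - Vf A Q x0 t :=
    intervalIntegral.integral_eq_sub_of_hasDerivAt
      (fun s _ => hasDerivAt_V hlyap x0 s) (hcont.neg.intervalIntegrable t (t+1))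
  rw [intervalIntegral.integral_neg] at hftc
  have h1 : Vf A Q x0 t - Vf A Q x0 (t + 1)
      = ∫ s in t..(t+1), flow A x0 s ⬝ᵥ S.mulVec (flow A x0 s) := by linarith
  rw [h1]
  have h2 : ∀ s : ℝ, flow A x0 s ⬝ᵥ S.mulVec (flow A x0 s)
      = (fun u => flow A (flow A x0 t) u ⬝ᵥ S.mulVec (flow A (flow A x0 t) u)) (s - t) := by
    intro s
    simp only []
    rw [← flow_shift]
  have h3 : (∫ s in t..(t+1), flow A x0 s ⬝ᵥ S.mulVec (flow A x0 s))
      = ∫ u in (t-t)..(t+1-t), flow A (flow A x0 t) u ⬝ᵥ S.mulVec (flow A (flow A x0 t) u) := by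
    rw [← intervalIntegral.integral_comp_sub_right
      (fun u => flow A (flow A x0 t) u ⬝ᵥ S.mulVec (flow A (flow A x0 t) u)) t]
    exact intervalIntegral.integral_congr fun s _ => h2 s
  rw [h3]
  have h4 : t - t = 0 := sub_self t
  have h5 : t + 1 - t = 1 := by ring
  rw [h4, h5, quad_W]
  rfl

end LasalleAux

open LasalleAux in
/-- LaSalle invariance principle for linear systems: if `Q ≻ 0`,
`QA + AᵀQ = -S` with `S ⪰ 0`, and the only vector annihilated by `S·Aᵏ` for all
`k ≥ 0` is zero, then every solution of `dx/dt = Ax` converges to the origin,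
and the origin is (Lyapunov) stable, hence asymptotically stable. -/
theorem lasalle_linear_asymptotic_stability
    {n : ℕ} (A Q S : Matrix (Fin n) (Fin n) ℝ)
    (hQ : Q.PosDef) (hS : S.PosSemidef)
    (hlyap : Q * A + Aᵀ * Q = -S)
    (hobs : ∀ x : Fin n → ℝ, (∀ k : ℕ, (S * A ^ k).mulVec x = 0) → x = 0) :
    (∀ x0 : Fin n → ℝ,
       Filter.Tendsto (fun t : ℝ => (NormedSpace.exp (t • A)).mulVec x0)
         Filter.atTop (nhds 0)) ∧
    (∀ ε : ℝ, 0 < ε → ∃ δ : ℝ, 0 < δ ∧ ∀ x0 : Fin n → ℝ, ‖x0‖ < δ →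
       ∀ t : ℝ, 0 ≤ t → ‖(NormedSpace.exp (t • A)).mulVec x0‖ < ε) := by
  rcases Nat.eq_zero_or_pos n with hn | hn
  · -- trivial case `n = 0`
    haveI : IsEmpty (Fin n) := ⟨fun i => by have := i.isLt; omega⟩
    have hz : ∀ v : Fin n → ℝ, v = 0 := fun v => funext fun i => (IsEmpty.false i).elim
    constructor
    · intro x0
      have he : ∀ t : ℝ, (NormedSpace.exp (t • A)).mulVec x0 = 0 := fun t => hz _
      exact Filter.Tendsto.congr (fun t => (he t).symm) tendsto_const_nhds
    · intro ε hε
      refine ⟨1, one_pos, fun x0 _ t _ => ?_⟩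
      rw [hz ((NormedSpace.exp (t • A)).mulVec x0)]
      simpa using hε
  · obtain ⟨cW, hcW, hWlb⟩ := quad_lower hn (Wmat A S 1) (fun y hy => Wpos hS hobs hy)
    obtain ⟨cQ, hcQ, hQlb⟩ := quad_lower hn Q (fun y hy => by
      have := hQ.dotProduct_mulVec_pos hy
      rwa [star_eq] at this)
    set CQ := ∑ i, ∑ j, |Q i j| with hCQdef
    have hCQ0 : 0 ≤ CQ :=
      Finset.sum_nonneg fun i _ => Finset.sum_nonneg fun j _ => abs_nonneg _
    constructor
    · -- convergence
      intro x0
      set V := Vf A Q x0 with hV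
      set x := flow A x0 with hx
      have hanti : Antitone V := V_antitone hS hlyap x0
      have hbdd : BddBelow (Set.range V) := by
        refine ⟨0, ?_⟩
        rintro v ⟨t, rfl⟩
        exact V_nonneg hQ x0 t
      have hVtend : Filter.Tendsto V Filter.atTop (nhds (⨅ t, V t)) :=
        tendsto_atTop_ciInf hanti hbdd
      have hVtend' : Filter.Tendsto (fun t => V (t + 1)) Filter.atTop (nhds (⨅ t, V t)) :=
        hVtend.comp (Filter.tendsto_atTop_add_const_right Filter.atTop 1 Filter.tendsto_id)
      have hdiffto : Filter.Tendsto (fun t => V t - V (t + 1)) Filter.atTop (nhds 0) := by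
        have := hVtend.sub hVtend'
        simpa using this
      have hsq : ∀ t : ℝ, ‖x t‖ ≤ Real.sqrt ((V t - V (t + 1)) / cW) := by
        intro t
        have h1 : cW * ‖x t‖ ^ 2 ≤ V t - V (t + 1) := by
          rw [hV, V_sub hlyap x0 t]
          exact hWlb (x t)
        have h2 : ‖x t‖ ^ 2 ≤ (V t - V (t + 1)) / cW := by
          rw [le_div_iff₀ hcW, mul_comm]
          exact h1
        rw [← Real.sqrt_sq (norm_nonneg (x t))]
        exact Real.sqrt_le_sqrt h2
      have hgto : Filter.Tendsto (fun t => Real.sqrt ((V t - V (t + 1)) / cW))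
          Filter.atTop (nhds 0) := by
        have h2 : Filter.Tendsto (fun t => (V t - V (t + 1)) / cW) Filter.atTop (nhds 0) := by
          simpa using hdiffto.div_const cW
        have := (Real.continuous_sqrt.tendsto 0).comp h2
        simpa [Function.comp_def] using this
      have hnorm : Filter.Tendsto (fun t => ‖x t‖) Filter.atTop (nhds 0) :=
        squeeze_zero (fun t => norm_nonneg _) hsq hgto
      exact tendsto_zero_iff_norm_tendsto_zero.2 hnorm
    · -- stability
      intro ε hε
      have hCQ1 : (0:ℝ) < CQ + 1 := by linarith
      refine ⟨Real.sqrt (cQ * ε ^ 2 / (CQ + 1)), Real.sqrt_pos.2 (by positivity), ?_⟩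
      intro x0 hx0 t ht
      set V := Vf A Q x0 with hV
      set x := flow A x0 with hx
      have hVt : V t ≤ V 0 := V_antitone hS hlyap x0 ht
      have hlow : cQ * ‖x t‖ ^ 2 ≤ V t := hQlb (x t)
      have hup : V 0 ≤ CQ * ‖x0‖ ^ 2 := by
        have h := quad_upper Q x0
        have e : V 0 = x0 ⬝ᵥ Q.mulVec x0 := by rw [hV, Vf, flow_zero]
        rw [e]
        exact h
      have hδ2 : Real.sqrt (cQ * ε ^ 2 / (CQ + 1)) ^ 2 = cQ * ε ^ 2 / (CQ + 1) :=
        Real.sq_sqrt (by positivity)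
      have hx02 : ‖x0‖ ^ 2 < cQ * ε ^ 2 / (CQ + 1) := by
        rw [← hδ2]
        exact pow_lt_pow_left₀ hx0 (norm_nonneg _) two_ne_zero
      have key : cQ * ‖x t‖ ^ 2 < cQ * ε ^ 2 := by
        have e1 : (CQ + 1) * (cQ * ε ^ 2 / (CQ + 1)) = cQ * ε ^ 2 := by
          field_simp
        nlinarith [sq_nonneg ‖x0‖, sq_nonneg ‖x t‖]
      have hlt : ‖x t‖ ^ 2 < ε ^ 2 := (mul_lt_mul_iff_right₀ hcQ).1 key
      exact lt_of_pow_lt_pow_left₀ 2 hε.le hlt
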